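/- Let s ∈ ℝ and 1 ≤ p < ∞, and let z = (z_k)_{k∈ℤ} ∈ ℓ^{s,p} satisfy z_0 = 0 and z_{−k} = conj(z_k) for all k ≥ 1. Then the torus T_z := { z̃ ∈ ℓ^{s,p} : z̃_0 = 0, z̃_{−k} = conj(z̃_k) and |z̃_k| = |z_k| for all k ≥ 1 } is a compact subset of ℓ^{s,p} with respect to the norm topology. -/

import Mathlib

open Filter Topology ComplexConjugate

/-- For `1 ≤ p < ∞` and `z ∈ ℓ^{s,p}` with `z_0 = 0` and `z_{−k} = conj z_k`, the torus
`T_z = {z̃ ∈ ℓ^{s,p} : z̃_0 = 0, z̃_{−k} = conj z̃_k, |z̃_k| = |z_k| ∀ k ≥ 1}` is compact in the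
norm topology of `ℓ^{s,p}` (formulated via sequential compactness, which is equivalent in a
metric space): every sequence in `T_z` has a subsequence converging in the `‖·‖_{s,p}`
distance to an element of `T_z`. -/
theorem stmt_13 (s p : ℝ) (hp : 1 ≤ p) (z : ℤ → ℂ) (hz0 : z 0 = 0)
    (hzsym : ∀ k : ℤ, 1 ≤ k → z (-k) = conj (z k))
    (hz : Summable fun k : ℤ => ((1 + |k| : ℝ) ^ s * ‖z k‖) ^ p)
    (u : ℕ → ℤ → ℂ)
    (hu : ∀ j : ℕ, u j 0 = 0 ∧ (∀ k : ℤ, 1 ≤ k → u j (-k) = conj (u j k)) ∧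
        ∀ k : ℤ, 1 ≤ k → ‖u j k‖ = ‖z k‖) :
    ∃ φ : ℕ → ℕ, StrictMono φ ∧ ∃ v : ℤ → ℂ,
      (v 0 = 0 ∧ (∀ k : ℤ, 1 ≤ k → v (-k) = conj (v k)) ∧
        ∀ k : ℤ, 1 ≤ k → ‖v k‖ = ‖z k‖) ∧
      Tendsto
        (fun j => (∑' k : ℤ, ((1 + |k| : ℝ) ^ s * ‖u (φ j) k - v k‖) ^ p) ^ (1 / p))
        atTop (𝓝 0) := by
  have hp0 : 0 < p := lt_of_lt_of_le one_pos hp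
  -- |z (-k)| = |z k| for all k ≥ 1
  have hzabs : ∀ k : ℤ, ‖z (-k)‖ = ‖z k‖ := by
    intro k
    rcases lt_trichotomy k 0 with hk | hk | hk
    · have hk1 : (1 : ℤ) ≤ -k := by omega
      have := hzsym (-k) hk1
      rw [neg_neg] at this
      rw [this, Complex.norm_conj]
    · subst hk; simp
    · rw [hzsym k hk, Complex.norm_conj]
  -- uniform modulus identity for all k ∈ ℤ
  have habs : ∀ j k, ‖u j k‖ = ‖z k‖ := by
    intro j k
    obtain ⟨h0, hsym, hmod⟩ := hu j
    rcases lt_trichotomy k 0 with hk | hk | hk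
    · have hk1 : (1 : ℤ) ≤ -k := by omega
      have h1 := hsym (-k) hk1
      rw [neg_neg] at h1
      rw [h1, Complex.norm_conj, hmod (-k) hk1, hzabs k]
    · subst hk; simp [h0, hz0]
    · exact hmod k hk
  -- the compact product set
  set K : Set (ℤ → ℂ) := Set.univ.pi fun k => Metric.closedBall (0 : ℂ) (‖z k‖)
    with hKdef
  have hK : IsCompact K :=
    isCompact_univ_pi fun k => isCompact_closedBall 0 _
  have hmem : ∀ j, u j ∈ K := by
    intro j
    rw [hKdef, Set.mem_univ_pi]
    intro k
    rw [Metric.mem_closedBall, dist_zero_right, habs j k]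
  obtain ⟨v, hvK, φ, hφ, hconv⟩ := hK.isSeqCompact hmem
  have hpt : ∀ k, Tendsto (fun j => u (φ j) k) atTop (𝓝 (v k)) := by
    intro k
    exact (tendsto_pi_nhds.mp hconv) k
  -- v has modulus ≤ |z k|
  have hvabs : ∀ k, ‖v k‖ ≤ ‖z k‖ := by
    intro k
    have := hvK k (Set.mem_univ k)
    rwa [Metric.mem_closedBall, dist_zero_right] at this
  refine ⟨φ, hφ, v, ⟨?_, ?_, ?_⟩, ?_⟩
  · -- v 0 = 0
    have h0 : Tendsto (fun j => u (φ j) 0) atTop (𝓝 (0 : ℂ)) := by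
      have : (fun j => u (φ j) 0) = fun _ => (0 : ℂ) := funext fun j => (hu (φ j)).1
      rw [this]; exact tendsto_const_nhds
    exact tendsto_nhds_unique (hpt 0) h0
  · -- symmetry
    intro k hk
    have h1 : Tendsto (fun j => u (φ j) (-k)) atTop (𝓝 (conj (v k))) := by
      have heq : (fun j => u (φ j) (-k)) = fun j => conj (u (φ j) k) :=
        funext fun j => (hu (φ j)).2.1 k hk
      rw [heq]
      exact (Complex.continuous_conj.tendsto _).comp (hpt k)
    exact tendsto_nhds_unique (hpt (-k)) h1
  · -- modulus preserved
    intro k hk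
    have h1 : Tendsto (fun j => ‖u (φ j) k‖) atTop (𝓝 (‖v k‖)) :=
      (continuous_norm.tendsto _).comp (hpt k)
    have h2 : (fun j => ‖u (φ j) k‖) = fun _ => ‖z k‖ :=
      funext fun j => habs (φ j) k
    rw [h2] at h1
    exact tendsto_nhds_unique h1 tendsto_const_nhds
  · -- norm convergence by dominated convergence
    set F : ℕ → ℤ → ℝ :=
      fun j k => ((1 + |k| : ℝ) ^ s * ‖u (φ j) k - v k‖) ^ p with hFdef
    have hw : ∀ k : ℤ, (0 : ℝ) ≤ (1 + |k| : ℝ) ^ s := fun k =>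
      Real.rpow_nonneg (by positivity) s
    have hbound : ∀ j k, ‖F j k‖ ≤ 2 ^ p * ((1 + |k| : ℝ) ^ s * ‖z k‖) ^ p := by
      intro j k
      have hd : ‖u (φ j) k - v k‖ ≤ 2 * ‖z k‖ := by
        calc ‖u (φ j) k - v k‖
            ≤ ‖u (φ j) k‖ + ‖v k‖ := by
              simpa using norm_sub_le (u (φ j) k) (v k)
          _ ≤ ‖z k‖ + ‖z k‖ := by
              rw [habs (φ j) k]; exact add_le_add le_rfl (hvabs k)
          _ = 2 * ‖z k‖ := by ring
      have hF0 : (0 : ℝ) ≤ F j k := Real.rpow_nonneg (by positivity) p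
      rw [Real.norm_of_nonneg hF0, hFdef]
      calc ((1 + |k| : ℝ) ^ s * ‖u (φ j) k - v k‖) ^ p
          ≤ ((1 + |k| : ℝ) ^ s * (2 * ‖z k‖)) ^ p := by
            apply Real.rpow_le_rpow (by positivity)
            · exact mul_le_mul_of_nonneg_left hd (hw k)
            · exact le_of_lt hp0
        _ = (2 * ((1 + |k| : ℝ) ^ s * ‖z k‖)) ^ p := by ring_nf
        _ = 2 ^ p * ((1 + |k| : ℝ) ^ s * ‖z k‖) ^ p := by
            rw [Real.mul_rpow (by norm_num) (by positivity)]
    have hsumbound :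
        Summable fun k : ℤ => 2 ^ p * ((1 + |k| : ℝ) ^ s * ‖z k‖) ^ p :=
      hz.mul_left _
    have hptF : ∀ k, Tendsto (fun j => F j k) atTop (𝓝 0) := by
      intro k
      have h1 : Tendsto (fun j => (1 + |k| : ℝ) ^ s * ‖u (φ j) k - v k‖)
          atTop (𝓝 0) := by
        have h2 : Tendsto (fun j => u (φ j) k - v k) atTop (𝓝 0) := by
          simpa using (hpt k).sub (tendsto_const_nhds : Tendsto (fun _ : ℕ => v k) atTop (𝓝 (v k)))
        have h3 : Tendsto (fun j => ‖u (φ j) k - v k‖) atTop (𝓝 0) := by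
          simpa [Function.comp_def] using (continuous_norm.tendsto 0).comp h2
        simpa using h3.const_mul ((1 + |k| : ℝ) ^ s)
      have h4 : ContinuousAt (fun t : ℝ => t ^ p) 0 :=
        Real.continuousAt_rpow_const 0 p (Or.inr hp0.le)
      have h5 := h4.tendsto.comp h1
      rw [Real.zero_rpow (ne_of_gt hp0)] at h5
      exact h5
    have hts : Tendsto (fun j => ∑' k : ℤ, F j k) atTop (𝓝 (∑' _ : ℤ, (0 : ℝ))) :=
      tendsto_tsum_of_dominated_convergence hsumbound hptF
        (Filter.Eventually.of_forall fun j => hbound j)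
    rw [tsum_zero] at hts
    have h6 : ContinuousAt (fun t : ℝ => t ^ (1 / p)) 0 :=
      Real.continuousAt_rpow_const 0 (1 / p) (Or.inr (by positivity))
    have h7 := h6.tendsto.comp hts
    rw [Real.zero_rpow (by positivity : (1 / p : ℝ) ≠ 0)] at h7
    exact h7
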